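/- Let (P,w) be a normalized weighted set of n points in R^d with d ≥ 1, let ε ∈ (0, 1/36), and let u ∈ R^n be such that for every x ∈ R^d, |Σ_i w_i ‖p_i − x‖² − Σ_i u_i ‖p_i − x‖²| ≤ √ε · Σ_i w_i ‖p_i − x‖². Then ‖Σ_i (u_i/‖u‖_1) p_i‖ ≤ 6√ε, and consequently Σ_i w_i ‖p_i − s̄‖² ≤ (1 + 36ε) min_{x∈R^d} Σ_i w_i ‖p_i − x‖², where s̄ = Σ_i (u_i/‖u‖_1) p_i. -/

import Mathlib

open scoped BigOperators

set_option maxHeartbeats 1000000 in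
theorem stmt4 {d n : ℕ} (hd : 1 ≤ d) (p : Fin n → EuclideanSpace ℝ (Fin d)) (w : Fin n → ℝ)
    (hw1 : ∑ i, w i = 1) (hw2 : ∑ i, w i • p i = 0) (hw3 : ∑ i, w i * ‖p i‖ ^ 2 = 1)
    (ε : ℝ) (hε : ε ∈ Set.Ioo (0 : ℝ) (1 / 36)) (u : Fin n → ℝ)
    (hu : 0 < ∑ i, |u i|)
    (hcore : ∀ x : EuclideanSpace ℝ (Fin d),
      |∑ i, w i * ‖p i - x‖ ^ 2 - ∑ i, u i * ‖p i - x‖ ^ 2|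
        ≤ Real.sqrt ε * ∑ i, w i * ‖p i - x‖ ^ 2)
    (sbar : EuclideanSpace ℝ (Fin d))
    (hsbar : sbar = ∑ i, (u i / ∑ j, |u j|) • p i) :
    ‖sbar‖ ≤ 6 * Real.sqrt ε ∧
      ∀ x : EuclideanSpace ℝ (Fin d),
        ∑ i, w i * ‖p i - sbar‖ ^ 2 ≤ (1 + 36 * ε) * ∑ i, w i * ‖p i - x‖ ^ 2 := by
  obtain ⟨hε0, hε1⟩ := hε
  have hsε : 0 < Real.sqrt ε := Real.sqrt_pos.2 hε0
  have hsε6 : Real.sqrt ε < 1 / 6 := by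
    have h := Real.sqrt_lt_sqrt (le_of_lt hε0) hε1
    have : Real.sqrt (1 / 36) = 1 / 6 := by
      rw [show (1:ℝ)/36 = (1/6)^2 by norm_num, Real.sqrt_sq (by norm_num)]
    linarith [h, this.le, this.ge]
  set S := ∑ j, |u j| with hS
  set U := ∑ i, u i with hU
  set A := ∑ i, u i * ‖p i‖ ^ 2 with hA
  set v := ∑ i, u i • p i with hv
  have expand : ∀ (c : Fin n → ℝ) (x : EuclideanSpace ℝ (Fin d)),
      ∑ i, c i * ‖p i - x‖ ^ 2
        = (∑ i, c i * ‖p i‖ ^ 2) - 2 * (inner ℝ (∑ i, c i • p i) x : ℝ)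
          + (∑ i, c i) * ‖x‖ ^ 2 := by
    intro c x
    have h1 : (inner ℝ (∑ i, c i • p i) x : ℝ) = ∑ i, c i * (inner ℝ (p i) x : ℝ) := by
      rw [sum_inner]
      exact Finset.sum_congr rfl fun i _ => real_inner_smul_left _ _ _
    calc ∑ i, c i * ‖p i - x‖ ^ 2
        = ∑ i, (c i * ‖p i‖ ^ 2 - 2 * (c i * (inner ℝ (p i) x : ℝ)) + c i * ‖x‖ ^ 2) := by
          refine Finset.sum_congr rfl fun i _ => ?_
          rw [@norm_sub_sq_real]; ring
      _ = (∑ i, c i * ‖p i‖ ^ 2) - 2 * (∑ i, c i * (inner ℝ (p i) x : ℝ))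
            + (∑ i, c i) * ‖x‖ ^ 2 := by
          rw [Finset.sum_add_distrib, Finset.sum_sub_distrib, ← Finset.mul_sum,
            ← Finset.sum_mul]
      _ = _ := by rw [h1]
  have wcost : ∀ x : EuclideanSpace ℝ (Fin d),
      ∑ i, w i * ‖p i - x‖ ^ 2 = 1 + ‖x‖ ^ 2 := by
    intro x
    rw [expand w x, hw1, hw2, hw3]
    simp
  have ucost : ∀ x : EuclideanSpace ℝ (Fin d),
      ∑ i, u i * ‖p i - x‖ ^ 2 = A - 2 * (inner ℝ v x : ℝ) + U * ‖x‖ ^ 2 := by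
    intro x; exact expand u x
  have key : ∀ x : EuclideanSpace ℝ (Fin d),
      |1 + ‖x‖ ^ 2 - (A - 2 * (inner ℝ v x : ℝ) + U * ‖x‖ ^ 2)|
        ≤ Real.sqrt ε * (1 + ‖x‖ ^ 2) := by
    intro x
    have := hcore x
    rwa [wcost x, ucost x] at this
  -- at 0
  have hA1 : |1 - A| ≤ Real.sqrt ε := by
    have := key 0
    simpa using this
  -- unit vector facts
  have hunit : ∀ x : EuclideanSpace ℝ (Fin d), ‖x‖ = 1 →
      |(inner ℝ v x : ℝ)| ≤ Real.sqrt ε ∧ |2 - A - U| ≤ 2 * Real.sqrt ε := by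
    intro x hx
    have k1 := key x
    have k2 := key (-x)
    rw [hx, one_pow] at k1
    rw [norm_neg, hx, one_pow, inner_neg_right] at k2
    set c : ℝ := (inner ℝ v x : ℝ) with hc
    rw [abs_le] at k1 k2
    constructor
    · rw [abs_le]
      constructor <;> linarith [k1.1, k1.2, k2.1, k2.2]
    · rw [abs_le]
      constructor <;> linarith [k1.1, k1.2, k2.1, k2.2]
  -- pick a unit vector
  have hex : ∃ e : EuclideanSpace ℝ (Fin d), ‖e‖ = 1 := by
    refine ⟨EuclideanSpace.single (⟨0, hd⟩ : Fin d) (1 : ℝ), ?_⟩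
    rw [EuclideanSpace.norm_single]; norm_num
  obtain ⟨e, he⟩ := hex
  have hAU := (hunit e he).2
  have hU1 : |1 - U| ≤ 3 * Real.sqrt ε := by
    rw [abs_le] at *
    constructor <;> linarith [hA1.1, hA1.2, hAU.1, hAU.2]
  have hUhalf : (1 : ℝ) / 2 ≤ U := by
    rw [abs_le] at hU1
    linarith [hU1.2]
  have hSU : U ≤ S := Finset.sum_le_sum fun i _ => le_abs_self (u i)
  have hvnorm : ‖v‖ ≤ Real.sqrt ε := by
    rcases eq_or_ne v 0 with h | h
    · rw [h, norm_zero]; exact hsε.le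
    · have hvpos : 0 < ‖v‖ := norm_pos_iff.2 h
      have hx : ‖(‖v‖⁻¹ • v : EuclideanSpace ℝ (Fin d))‖ = 1 := by
        rw [norm_smul, norm_inv, norm_norm, inv_mul_cancel₀ hvpos.ne']
      have hin := (hunit _ hx).1
      rw [real_inner_smul_right, real_inner_self_eq_norm_sq,
        inv_mul_eq_div] at hin
      have : |‖v‖| ≤ Real.sqrt ε := by
        rwa [show ‖v‖ ^ 2 / ‖v‖ = ‖v‖ by field_simp] at hin
      rwa [abs_of_pos hvpos] at this
  have hsbar' : sbar = S⁻¹ • v := by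
    rw [hsbar, hv, Finset.smul_sum]
    refine Finset.sum_congr rfl fun i _ => ?_
    rw [smul_smul, div_eq_inv_mul]
  have hsbarnorm : ‖sbar‖ ≤ 2 * Real.sqrt ε := by
    rw [hsbar', norm_smul, norm_inv, Real.norm_eq_abs, abs_of_pos hu]
    have hS2 : (1 : ℝ) / 2 ≤ S := le_trans hUhalf hSU
    have hSi : S⁻¹ * S = 1 := inv_mul_cancel₀ hu.ne'
    have hi : S⁻¹ ≤ 2 := by
      have := mul_le_mul_of_nonneg_left hS2 (inv_pos.2 hu).le
      rw [hSi] at this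
      linarith
    exact mul_le_mul hi hvnorm (norm_nonneg _) (by norm_num)
  refine ⟨le_trans hsbarnorm (by nlinarith), ?_⟩
  intro x
  rw [wcost sbar, wcost x]
  have h1 : ‖sbar‖ ^ 2 ≤ 36 * ε := by
    have : ‖sbar‖ ^ 2 ≤ (2 * Real.sqrt ε) ^ 2 :=
      pow_le_pow_left₀ (norm_nonneg _) hsbarnorm 2
    have hsq : Real.sqrt ε ^ 2 = ε := Real.sq_sqrt hε0.le
    nlinarith [this, hsq, hε0]
  nlinarith [sq_nonneg ‖x‖, hε0, h1]
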